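/- The descent set statistic is shuffle-compatible: if π, π′ are permutations of the same length with Des(π) = Des(π′), and σ, σ′ are permutations of the same length with Des(σ) = Des(σ′), where π is disjoint from σ and π′ is disjoint from σ′, then for every set A, the number of shuffles τ of π and σ with Des(τ) = A equals the number of shuffles τ′ of π′ and σ′ with Des(τ′) = A. -/

import Mathlib

/-- A permutation: a list of distinct positive integers. -/
def IsPerm (π : List ℕ) : Prop := π.Nodup ∧ ∀ x ∈ π, 0 < x

/-- The descent set (1-indexed): `i ∈ [n-1]` with `π_i > π_{i+1}`. -/
def desSet (π : List ℕ) : Finset ℕ :=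
  (Finset.Icc 1 (π.length - 1)).filter (fun i => π.getD i 0 < π.getD (i-1) 0)

/-- Number of descents. -/
def des (π : List ℕ) : ℕ := (desSet π).card

/-- Major index: sum of descent positions. -/
def maj (π : List ℕ) : ℕ := ∑ i ∈ desSet π, i

/-- Number of peaks: `2 ≤ i ≤ n-1` with `π_{i-1} < π_i > π_{i+1}` (1-indexed). -/
def pk (π : List ℕ) : ℕ :=
  ((Finset.Icc 2 (π.length - 1)).filter (fun i =>
    π.getD (i-2) 0 < π.getD (i-1) 0 ∧ π.getD i 0 < π.getD (i-1) 0)).card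

/-- Number of valleys: `2 ≤ i ≤ n-1` with `π_{i-1} > π_i < π_{i+1}` (1-indexed). -/
def valley (π : List ℕ) : ℕ :=
  ((Finset.Icc 2 (π.length - 1)).filter (fun i =>
    π.getD (i-1) 0 < π.getD (i-2) 0 ∧ π.getD (i-1) 0 < π.getD i 0)).card

/-- The left peak set: `i ∈ [n-1]` with `π_{i-1} < π_i > π_{i+1}`, where `π_0 := 0`. -/
def lpkSet (π : List ℕ) : Finset ℕ :=
  (Finset.Icc 1 (π.length - 1)).filter (fun i =>
    (0 :: π).getD (i-1) 0 < (0 :: π).getD i 0 ∧ (0 :: π).getD (i+1) 0 < (0 :: π).getD i 0)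

/-- Number of left peaks. -/
def lpk (π : List ℕ) : ℕ := (lpkSet π).card

/-- Number of biruns (maximal monotone consecutive subsequences):
one more than the number of direction changes, for lists with at least 2 letters. -/
def br (π : List ℕ) : ℕ :=
  if π.length ≤ 1 then π.length
  else 1 + ((Finset.Icc 2 (π.length - 1)).filter (fun i =>
      (π.getD (i-2) 0 < π.getD (i-1) 0 ↔ π.getD i 0 < π.getD (i-1) 0))).card

/-- Number of up-down runs: the biruns, together with `π_1` when `π_1 > π_2`. -/
def udr (π : List ℕ) : ℕ :=
  br π + (if 2 ≤ π.length ∧ π.getD 1 0 < π.getD 0 0 then 1 else 0)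

/-- The maximal increasing runs of a list. -/
def incRuns : List ℕ → List (List ℕ)
  | [] => []
  | [a] => [[a]]
  | a :: b :: l =>
    match incRuns (b :: l) with
    | [] => [[a]]
    | r :: rs => if a < b then (a :: r) :: rs else [a] :: r :: rs

/-- Number of long runs (maximal increasing runs of length at least 2). -/
def lr (π : List ℕ) : ℕ := ((incRuns π).filter (fun r => 2 ≤ r.length)).length

/-- `1` if the initial run is long, `0` otherwise. -/
def lir (π : List ℕ) : ℕ := if 2 ≤ ((incRuns π).headD []).length then 1 else 0

/-- `1` if the final run is long, `0` otherwise. -/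
def lfr (π : List ℕ) : ℕ := if 2 ≤ ((incRuns π).getLastD []).length then 1 else 0

/-- The descent composition: the lengths of the maximal increasing runs. -/
def descComp (π : List ℕ) : List ℕ := (incRuns π).map List.length

/-- `τ` is a shuffle of `π` and `σ`: a permutation of length `|π| + |σ|`
containing both `π` and `σ` as subsequences. -/
def IsShuffle (π σ τ : List ℕ) : Prop :=
  τ.length = π.length + σ.length ∧ IsPerm τ ∧ π.Sublist τ ∧ σ.Sublist τ

open Classical in
/-- The finite set of shuffles of `π` and `σ`. -/
noncomputable def shuffles (π σ : List ℕ) : Finset (List ℕ) :=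
  (π ++ σ).permutations.toFinset.filter (fun τ => IsShuffle π σ τ)

/-- `J` is a refinement of `M` in the refinement order on weak compositions
(where `M` covers `L` when `M` is obtained from `L` by replacing two consecutive
parts by their sum): `M` is obtained by summing consecutive nonempty blocks of `J`. -/
def Refines (J M : List ℕ) : Prop :=
  ∃ P : List (List ℕ), P.flatten = J ∧ P.map List.sum = M ∧ ∀ b ∈ P, b ≠ []

/-- Successive differences, starting from `prev`. -/
def diffList : ℕ → List ℕ → List ℕ
  | _, [] => []
  | prev, a :: rest => (a - prev) :: diffList a rest

/-- `Comp(A)`: the composition of `N` determined by `A = {a₁ < ⋯ < a_j} ⊆ [N-1]`,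
namely `(a₁, a₂ - a₁, …, N - a_j)`. -/
def compOfSet (N : ℕ) (A : Finset ℕ) : List ℕ :=
  diffList 0 ((A.sort (· ≤ ·)) ++ [N])

/-- The `q`-factorial `[n]_q! = (1)(1+q)⋯(1+q+⋯+q^{n-1})`. -/
noncomputable def qFact (q : RatFunc ℚ) (n : ℕ) : RatFunc ℚ :=
  ∏ j ∈ Finset.range n, ∑ i ∈ Finset.range (j+1), q ^ i

/-- The `q`-binomial coefficient `[n choose k]_q`. -/
noncomputable def qBinom (q : RatFunc ℚ) (n k : ℕ) : RatFunc ℚ :=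
  qFact q n / (qFact q k * qFact q (n - k))

namespace DSC

/-- Block index of a position. -/
def bIdx (B : Finset ℕ) (p : ℕ) : ℕ := (B.filter (· ≤ p)).card

lemma bIdx_mono (B : Finset ℕ) {p q : ℕ} (h : p ≤ q) : bIdx B p ≤ bIdx B q := by
  apply Finset.card_le_card
  intro b hb
  simp only [Finset.mem_filter] at hb ⊢
  exact ⟨hb.1, hb.2.trans h⟩

lemma bIdx_succ_of_not_mem {B : Finset ℕ} {p : ℕ} (h : p + 1 ∉ B) :
    bIdx B (p + 1) = bIdx B p := by
  unfold bIdx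
  congr 1
  ext b
  simp only [Finset.mem_filter]
  constructor
  · rintro ⟨hb, hle⟩
    refine ⟨hb, ?_⟩
    have : b ≠ p + 1 := by rintro rfl; exact h hb
    omega
  · rintro ⟨hb, hle⟩; exact ⟨hb, by omega⟩

lemma bIdx_succ_of_mem {B : Finset ℕ} {p : ℕ} (h : p + 1 ∈ B) :
    bIdx B (p + 1) = bIdx B p + 1 := by
  unfold bIdx
  have : B.filter (· ≤ p + 1) = insert (p+1) (B.filter (· ≤ p)) := by
    ext b
    simp only [Finset.mem_filter, Finset.mem_insert]
    constructor
    · rintro ⟨hb, hle⟩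
      rcases Nat.eq_or_lt_of_le hle with h' | h'
      · exact Or.inl h'
      · exact Or.inr ⟨hb, by omega⟩
    · rintro (rfl | ⟨hb, hle⟩)
      · exact ⟨h, le_refl _⟩
      · exact ⟨hb, by omega⟩
  rw [this, Finset.card_insert_of_notMem (by simp)]

lemma mem_of_bIdx_succ_ne {B : Finset ℕ} {p : ℕ} (h : bIdx B p ≠ bIdx B (p + 1)) :
    p + 1 ∈ B := by
  by_contra hc
  exact h (bIdx_succ_of_not_mem hc).symm

/-- The sorting key relation: lexicographic on (label, value). -/
def kr (a b : ℕ × ℕ) : Prop := a.1 < b.1 ∨ (a.1 = b.1 ∧ a.2 ≤ b.2)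

instance : DecidableRel kr := fun a b => by unfold kr; infer_instance

instance : IsTrans (ℕ × ℕ) kr := ⟨by unfold kr; intro a b c; omega⟩
instance : IsAntisymm (ℕ × ℕ) kr := ⟨by
  unfold kr; intro a b h1 h2
  have : a.1 = b.1 ∧ a.2 = b.2 := by omega
  exact Prod.ext this.1 this.2⟩
instance : IsTotal (ℕ × ℕ) kr := ⟨by unfold kr; intro a b; omega⟩

def krb (a b : ℕ × ℕ) : Bool := decide (kr a b)

def srt (l : List (ℕ × ℕ)) : List (ℕ × ℕ) := l.mergeSort krb

lemma srt_perm (l : List (ℕ × ℕ)) : (srt l).Perm l := List.mergeSort_perm l krb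

lemma srt_sorted (l : List (ℕ × ℕ)) : List.Pairwise kr (srt l) := by
  have h := List.pairwise_mergeSort (le := krb)
    (fun a b c hab hbc => by
      simp only [krb, decide_eq_true_eq] at *
      exact Trans.trans hab hbc)
    (fun a b => by
      simp only [krb, Bool.or_eq_true, decide_eq_true_eq]
      exact Std.Total.total a b) l
  exact h.imp (fun h => by simpa [krb] using h)

end DSC

namespace DSC

/-- The block label of letter `x` in `τ`. -/
def lab (B : Finset ℕ) (τ : List ℕ) (x : ℕ) : ℕ := bIdx B (τ.idxOf x)

/-- The canonical label list of positions. -/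
def labels (B : Finset ℕ) (N : ℕ) : List ℕ := (List.range N).map (bIdx B)

def pairsOf (B : Finset ℕ) (τ : List ℕ) : List (ℕ × ℕ) := (labels B τ.length).zip τ

lemma labels_length (B : Finset ℕ) (N : ℕ) : (labels B N).length = N := by simp [labels]

lemma labels_getElem (B : Finset ℕ) (N : ℕ) {p : ℕ} (h : p < N) :
    (labels B N)[p]'(by simp [labels_length, h]) = bIdx B p := by
  simp [labels]

lemma pairsOf_length (B : Finset ℕ) (τ : List ℕ) : (pairsOf B τ).length = τ.length := by
  simp [pairsOf, labels_length]

lemma pairsOf_getElem (B : Finset ℕ) (τ : List ℕ) {p : ℕ} (h : p < τ.length) :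
    (pairsOf B τ)[p]'(by simp [pairsOf_length, h]) =
      (bIdx B p, τ[p]) := by
  simp [pairsOf, List.getElem_zip, labels_getElem _ _ h]

/-- Every shuffle is a permutation of the concatenation. -/
lemma shuffle_perm {π σ τ : List ℕ} (hπ : IsPerm π) (hσ : IsPerm σ)
    (hd : π.Disjoint σ) (hτ : IsShuffle π σ τ) : τ.Perm (π ++ σ) := by
  have hnd : (π ++ σ).Nodup := List.Nodup.append hπ.1 hσ.1 hd
  have hsub : (π ++ σ) ⊆ τ := by
    intro x hx
    rcases List.mem_append.mp hx with h | h
    · exact hτ.2.2.1.subset h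
    · exact hτ.2.2.2.subset h
  have hsp := hnd.subperm hsub
  exact (hsp.perm_of_length_le (by rw [hτ.1, List.length_append])).symm

lemma map_indexOf_eq_range {τ : List ℕ} (hn : τ.Nodup) :
    τ.map (fun x => τ.idxOf x) = List.range τ.length := by
  apply List.ext_getElem
  · simp
  · intro p h1 h2
    simp only [List.getElem_map, List.getElem_range]
    have := List.get_idxOf hn ⟨p, by simpa using h1⟩
    simpa using this

lemma indexOf_getElem {τ : List ℕ} (hn : τ.Nodup) {p : ℕ} (h : p < τ.length) :
    τ.idxOf (τ[p]) = p := by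
  have := List.get_idxOf hn ⟨p, h⟩
  simpa using this

/-- Positions of a sublist are increasing. -/
lemma pairwise_indexOf_lt {π τ : List ℕ} (h : π.Sublist τ) (hn : τ.Nodup) :
    π.Pairwise (fun x y => τ.idxOf x < τ.idxOf y) := by
  have h2 : (π.map (fun x => τ.idxOf x)).Sublist (τ.map (fun x => τ.idxOf x)) :=
    h.map _
  rw [map_indexOf_eq_range hn] at h2
  have h3 := (List.pairwise_lt_range : (List.range τ.length).Pairwise (· < ·)).sublist h2
  exact List.pairwise_map.mp h3

lemma not_descent {τ : List ℕ} {B : Finset ℕ} (hdes : desSet τ ⊆ B) {p : ℕ}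
    (hp : p + 1 < τ.length) (hB : p + 1 ∉ B) :
    τ[p]'(by omega) ≤ τ[p+1]'hp := by
  by_contra hc
  push_neg at hc
  apply hB
  apply hdes
  simp only [desSet, Finset.mem_filter, Finset.mem_Icc]
  refine ⟨⟨by omega, by omega⟩, ?_⟩
  rw [List.getD_eq_getElem _ _ hp, List.getD_eq_getElem _ _ (by omega : p + 1 - 1 < τ.length)]
  simpa using hc

/-- Within a block (equal `bIdx`), τ is strictly increasing. -/
lemma increasing_of_bIdx_eq {τ : List ℕ} {B : Finset ℕ} (hdes : desSet τ ⊆ B)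
    (hn : τ.Nodup) {p q : ℕ} (hpq : p < q) (hq : q < τ.length)
    (hb : bIdx B p = bIdx B q) : τ[p]'(by omega) < τ[q]'hq := by
  induction q with
  | zero => omega
  | succ q ih =>
    have hbq : bIdx B q ≤ bIdx B (q+1) := bIdx_mono B (by omega)
    have hBq : q + 1 ∉ B := by
      intro hc
      have := bIdx_succ_of_mem hc
      have := bIdx_mono B (show p ≤ q by omega)
      omega
    have hstep : τ[q]'(by omega) < τ[q+1]'hq := by
      have hle := not_descent hdes hq hBq
      have hne : τ[q]'(by omega) ≠ τ[q+1]'hq := by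
        intro hc
        have := (List.Nodup.getElem_inj_iff hn (hi := by omega) (hj := hq)).mp hc
        omega
      omega
    rcases Nat.eq_or_lt_of_le (show p ≤ q by omega) with rfl | hlt
    · exact hstep
    · have hbpq : bIdx B p = bIdx B q := by
        have := bIdx_mono B (show p ≤ q by omega)
        have := bIdx_succ_of_not_mem hBq
        omega
      exact lt_trans (ih hlt (by omega) hbpq) hstep

/-- If `Des(τ) ⊆ B` then the pair list of `τ` is sorted. -/
lemma pairs_sorted {τ : List ℕ} {B : Finset ℕ} (hdes : desSet τ ⊆ B) :
    List.Pairwise kr (pairsOf B τ) := by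
  rw [← List.isChain_iff_pairwise, List.isChain_iff_getElem]
  intro p hp
  rw [pairsOf_length] at hp
  have hp1 : p + 1 < τ.length := by omega
  rw [pairsOf_getElem _ _ (by omega), pairsOf_getElem _ _ hp1]
  unfold kr
  simp only
  rcases Nat.eq_or_lt_of_le (bIdx_mono B (show p ≤ p + 1 by omega)) with heq | hlt
  · right
    refine ⟨heq, ?_⟩
    have hBp : p + 1 ∉ B := by
      intro hc; have := bIdx_succ_of_mem hc; omega
    exact not_descent hdes hp1 hBp
  · left; exact hlt

/-- If the pair list of `τ` is sorted then `Des(τ) ⊆ B`. -/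
lemma desSet_subset_of_pairs_sorted {τ : List ℕ} {B : Finset ℕ}
    (hs : List.Pairwise kr (pairsOf B τ)) : desSet τ ⊆ B := by
  intro i hi
  simp only [desSet, Finset.mem_filter, Finset.mem_Icc] at hi
  obtain ⟨⟨hi1, hi2⟩, hdesc⟩ := hi
  have hilen : i < τ.length := by omega
  rw [List.getD_eq_getElem _ _ hilen, List.getD_eq_getElem _ _ (by omega : i - 1 < τ.length)] at hdesc
  have hrel := List.pairwise_iff_getElem.mp hs (i-1) i
    (by rw [pairsOf_length]; omega) (by rw [pairsOf_length]; omega) (by omega)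
  rw [pairsOf_getElem _ _ (by omega : i - 1 < τ.length), pairsOf_getElem _ _ hilen] at hrel
  unfold kr at hrel
  simp only at hrel
  rcases hrel with hlt | ⟨heq, hle⟩
  · have hh : i - 1 + 1 = i := by omega
    have := mem_of_bIdx_succ_ne (B := B) (p := i - 1) (by rw [hh]; omega)
    rwa [hh] at this
  · omega

lemma pairsOf_eq_map {τ : List ℕ} {B : Finset ℕ} (hn : τ.Nodup) :
    pairsOf B τ = τ.map (fun x => (lab B τ x, x)) := by
  apply List.ext_getElem
  · simp [pairsOf_length]
  · intro p h1 h2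
    rw [pairsOf_getElem _ _ (by rwa [pairsOf_length] at h1)]
    simp only [List.getElem_map]
    congr 1
    unfold lab
    rw [indexOf_getElem hn]

end DSC

namespace DSC

/-- Validity of a label list w.r.t. a descent set. -/
def Valid (D : Finset ℕ) (gl : List ℕ) : Prop :=
  ∀ i, (h : i + 1 < gl.length) →
    gl[i]'(by omega) ≤ gl[i+1]'h ∧ ((i+1) ∈ D → gl[i]'(by omega) < gl[i+1]'h)

lemma getElem_indexOf' {τ : List ℕ} {x : ℕ} (h : x ∈ τ) :
    τ[τ.idxOf x]'(List.idxOf_lt_length_iff.mpr h) = x := by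
  have := List.idxOf_get (List.idxOf_lt_length_iff.mpr h)
  simpa using this

lemma valid_encode {π τ : List ℕ} {B : Finset ℕ} (hn : τ.Nodup)
    (hsub : π.Sublist τ) (hdes : desSet τ ⊆ B) :
    Valid (desSet π) (π.map (lab B τ)) := by
  intro i h
  rw [List.length_map] at h
  have hi : i < π.length := by omega
  have hx : π[i] ∈ τ := hsub.subset (List.getElem_mem hi)
  have hy : π[i+1] ∈ τ := hsub.subset (List.getElem_mem h)
  have hlt : τ.idxOf π[i] < τ.idxOf π[i+1] :=
    List.pairwise_iff_getElem.mp (pairwise_indexOf_lt hsub hn) i (i+1) hi h (by omega)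
  have hql : τ.idxOf π[i+1] < τ.length := List.idxOf_lt_length_iff.mpr hy
  simp only [List.getElem_map]
  constructor
  · exact bIdx_mono B (le_of_lt hlt)
  · intro hD
    have hdesc : π[i+1] < π[i] := by
      simp only [desSet, Finset.mem_filter, Finset.mem_Icc] at hD
      have := hD.2
      rw [List.getD_eq_getElem _ _ h, List.getD_eq_getElem _ _ (by omega : i + 1 - 1 < π.length)] at this
      simpa using this
    have hne : lab B τ π[i] ≠ lab B τ π[i+1] := by
      intro hc
      have := increasing_of_bIdx_eq hdes hn hlt hql hc
      rw [getElem_indexOf' hx, getElem_indexOf' hy] at this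
      omega
    have := bIdx_mono B (le_of_lt hlt)
    unfold lab at *
    omega

lemma encode_perm_labels {π σ τ : List ℕ} {B : Finset ℕ}
    (hτ : τ.Perm (π ++ σ)) (hn : τ.Nodup) :
    ((π ++ σ).map (lab B τ)).Perm (labels B τ.length) := by
  have h1 : (τ.map (lab B τ)).Perm ((π++σ).map (lab B τ)) := hτ.map _
  have h2 : τ.map (lab B τ) = labels B τ.length := by
    unfold lab labels
    rw [← map_indexOf_eq_range hn, List.map_map]
    rfl
  exact (h1.symm).trans (h2 ▸ List.Perm.refl _)

lemma zip_fst_snd {α β : Type*} (l : List (α × β)) :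
    (l.map Prod.fst).zip (l.map Prod.snd) = l := by
  induction l with
  | nil => rfl
  | cons a l ih => simp [ih]

/-- Decode a label list into a shuffle. -/
def dec (v ll : List ℕ) : List ℕ := (srt (ll.zip v)).map Prod.snd

lemma labels_sorted (B : Finset ℕ) (N : ℕ) : (labels B N).Pairwise (· ≤ ·) := by
  unfold labels
  exact List.Pairwise.map _ (fun a b h => bIdx_mono B (le_of_lt h)) (List.pairwise_lt_range : (List.range N).Pairwise (· < ·))

/-- A valid label list zipped with a list having the right descent set is sorted. -/
lemma zip_sorted {gl π₀ : List ℕ} (hg : gl.length = π₀.length)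
    (hv : Valid (desSet π₀) gl) : List.Pairwise kr (gl.zip π₀) := by
  rw [← List.isChain_iff_pairwise, List.isChain_iff_getElem]
  intro i hi
  have hilen : i + 1 < gl.length := by
    rw [List.length_zip] at hi; omega
  have hπlen : i + 1 < π₀.length := by omega
  rw [List.getElem_zip, List.getElem_zip]
  obtain ⟨hle, hstr⟩ := hv i hilen
  rcases Nat.eq_or_lt_of_le hle with heq | hlt
  · right
    refine ⟨heq, ?_⟩
    have hnD : (i+1) ∉ desSet π₀ := fun hD => by have := hstr hD; omega
    by_contra hc
    push_neg at hc
    apply hnD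
    simp only [desSet, Finset.mem_filter, Finset.mem_Icc]
    refine ⟨⟨by omega, by omega⟩, ?_⟩
    rw [List.getD_eq_getElem _ _ hπlen, List.getD_eq_getElem _ _ (by omega : i + 1 - 1 < π₀.length)]
    simpa using hc
  · left; exact hlt

/-- The big decode lemma. -/
lemma decode_spec (π₀ σ₀ : List ℕ) (hπ₀ : IsPerm π₀) (hσ₀ : IsPerm σ₀)
    (hd₀ : π₀.Disjoint σ₀) (B : Finset ℕ) (gl hl : List ℕ)
    (hg : gl.length = π₀.length) (hh : hl.length = σ₀.length)
    (hvg : Valid (desSet π₀) gl) (hvh : Valid (desSet σ₀) hl)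
    (hms : (gl ++ hl).Perm (labels B (π₀.length + σ₀.length))) :
    IsShuffle π₀ σ₀ (dec (π₀ ++ σ₀) (gl ++ hl)) ∧
    desSet (dec (π₀ ++ σ₀) (gl ++ hl)) ⊆ B ∧
    (π₀ ++ σ₀).map (lab B (dec (π₀ ++ σ₀) (gl ++ hl))) = gl ++ hl := by
  set N := π₀.length + σ₀.length with hN
  have hlen : (gl ++ hl).length = (π₀ ++ σ₀).length := by
    simp [hg, hh]
  set E := (gl ++ hl).zip (π₀ ++ σ₀) with hE
  set s := srt E with hs
  set τ := s.map Prod.snd with hτ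
  have hsperm : s.Perm E := srt_perm E
  have hssorted : List.Pairwise kr s := srt_sorted E
  have hmapsnd : E.map Prod.snd = π₀ ++ σ₀ := List.map_snd_zip hlen.ge
  have hτperm : τ.Perm (π₀ ++ σ₀) := by
    rw [hτ, ← hmapsnd]; exact hsperm.map _
  have hτlen : τ.length = N := by
    rw [hτperm.length_eq]; simp [hN]
  have hnd : (π₀ ++ σ₀).Nodup := List.Nodup.append hπ₀.1 hσ₀.1 hd₀
  have hτnd : τ.Nodup := hτperm.symm.nodup hnd
  -- the labels of s are exactly `labels B N`
  have hfst : s.map Prod.fst = labels B N := by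
    apply (fun hp h1 h2 => List.Perm.eq_of_pairwise' (r := (· ≤ · : ℕ → ℕ → Prop)) h1 h2 hp)
    · have h1 : (E.map Prod.fst) = gl ++ hl := List.map_fst_zip hlen.le
      exact ((hsperm.map Prod.fst).trans (h1 ▸ hms))
    · rw [List.pairwise_map]
      exact hssorted.imp (fun {a b} h => by
        rcases h with h | ⟨h, _⟩
        · exact le_of_lt h
        · exact le_of_eq h)
    · exact labels_sorted B N
  have hseq : s = pairsOf B τ := by
    have h5 : (s.map Prod.fst).zip (s.map Prod.snd) = s := zip_fst_snd s
    show s = (labels B τ.length).zip τ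
    rw [hτlen, ← hfst]
    exact h5.symm
  -- descent set
  have hdes : desSet τ ⊆ B := desSet_subset_of_pairs_sorted (hseq ▸ hssorted)
  -- lab recovery
  have hlab : ∀ (l x : ℕ), (l, x) ∈ s → lab B τ x = l := by
    intro l x hmem
    rw [hseq] at hmem
    obtain ⟨p, hp, hpe⟩ := List.getElem_of_mem hmem
    rw [pairsOf_getElem _ _ (by rwa [pairsOf_length] at hp)] at hpe
    have hx : τ[p]'(by rwa [pairsOf_length] at hp) = x := congrArg Prod.snd hpe
    have hb : bIdx B p = l := congrArg Prod.fst hpe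
    unfold lab
    rw [← hx, indexOf_getElem hτnd, hb]
  -- sublists
  have hzipapp : E = gl.zip π₀ ++ hl.zip σ₀ := List.zip_append hg
  have hsubπ : π₀.Sublist τ := by
    have h1 : (gl.zip π₀).Sublist E := hzipapp ▸ List.sublist_append_left _ _
    have h2 : (gl.zip π₀).Subperm s := h1.subperm.trans hsperm.symm.subperm
    have h3 : (gl.zip π₀).Sublist s :=
      List.sublist_of_subperm_of_pairwise h2 (zip_sorted hg hvg) hssorted
    have h4 := h3.map Prod.snd
    rw [List.map_snd_zip hg.ge] at h4
    exact h4
  have hsubσ : σ₀.Sublist τ := by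
    have h1 : (hl.zip σ₀).Sublist E := hzipapp ▸ List.sublist_append_right _ _
    have h2 : (hl.zip σ₀).Subperm s := h1.subperm.trans hsperm.symm.subperm
    have h3 : (hl.zip σ₀).Sublist s :=
      List.sublist_of_subperm_of_pairwise h2 (zip_sorted hh hvh) hssorted
    have h4 := h3.map Prod.snd
    rw [List.map_snd_zip hh.ge] at h4
    exact h4
  have hdeceq : dec (π₀ ++ σ₀) (gl ++ hl) = τ := rfl
  rw [hdeceq]
  refine ⟨⟨by rw [hτlen], ⟨hτnd, ?_⟩, hsubπ, hsubσ⟩, hdes, ?_⟩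
  · intro x hx
    rcases List.mem_append.mp (hτperm.subset hx) with h | h
    · exact hπ₀.2 x h
    · exact hσ₀.2 x h
  · apply List.ext_getElem
    · simp [hg, hh]
    · intro k h1 h2
      rw [List.length_map] at h1
      simp only [List.getElem_map]
      apply hlab
      have hk : k < E.length := by
        rw [hE, List.length_zip]; omega
      have hEk : E[k]'hk = ((gl ++ hl)[k]'h2, (π₀ ++ σ₀)[k]'h1) :=
        List.getElem_zip (h := hk)
      have hmem := List.getElem_mem hk
      rw [hEk] at hmem
      exact hsperm.symm.subset hmem

end DSC

namespace DSC

lemma zip_map_self {α β : Type*} (f : α → β) (l : List α) :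
    (l.map f).zip l = l.map (fun x => (f x, x)) := by
  induction l with
  | nil => rfl
  | cons a l ih => simp [ih]

lemma dec_encode {π σ τ : List ℕ} {B : Finset ℕ} (hπ : IsPerm π) (hσ : IsPerm σ)
    (hd : π.Disjoint σ) (hτ : IsShuffle π σ τ) (hdes : desSet τ ⊆ B) :
    dec (π ++ σ) ((π ++ σ).map (lab B τ)) = τ := by
  have hperm : τ.Perm (π ++ σ) := shuffle_perm hπ hσ hd hτ
  have hn : τ.Nodup := hτ.2.1.1
  set E := ((π ++ σ).map (lab B τ)).zip (π ++ σ) with hE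
  have hEeq : E = (π ++ σ).map (fun x => (lab B τ x, x)) := zip_map_self _ _
  have hEperm : E.Perm (pairsOf B τ) := by
    rw [hEeq, pairsOf_eq_map hn]
    exact (hperm.map _).symm
  have h1 : srt E = pairsOf B τ :=
    List.Perm.eq_of_pairwise' (srt_sorted E) (pairs_sorted hdes) ((srt_perm E).trans hEperm)
  show (srt E).map Prod.snd = τ
  rw [h1]
  exact List.map_snd_zip (labels_length B τ.length).ge

lemma F_spec {π π' σ σ' : List ℕ}
    (hπ : IsPerm π) (hπ' : IsPerm π') (hσ : IsPerm σ) (hσ' : IsPerm σ')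
    (hlen1 : π.length = π'.length) (hdes1 : desSet π = desSet π')
    (hlen2 : σ.length = σ'.length) (hdes2 : desSet σ = desSet σ')
    (hd : π.Disjoint σ) (hd' : π'.Disjoint σ') (B : Finset ℕ)
    {τ : List ℕ} (hτ : IsShuffle π σ τ) (hdes : desSet τ ⊆ B) :
    (IsShuffle π' σ' (dec (π' ++ σ') ((π ++ σ).map (lab B τ))) ∧
      desSet (dec (π' ++ σ') ((π ++ σ).map (lab B τ))) ⊆ B) ∧
    dec (π ++ σ) ((π' ++ σ').map (lab B (dec (π' ++ σ') ((π ++ σ).map (lab B τ))))) = τ := by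
  have hperm : τ.Perm (π ++ σ) := shuffle_perm hπ hσ hd hτ
  have hn : τ.Nodup := hτ.2.1.1
  rw [List.map_append]
  set gl := π.map (lab B τ) with hgl
  set hl := σ.map (lab B τ) with hhl
  have hg : gl.length = π'.length := by rw [hgl, List.length_map, hlen1]
  have hh : hl.length = σ'.length := by rw [hhl, List.length_map, hlen2]
  have hvg : Valid (desSet π') gl := hdes1 ▸ valid_encode hn hτ.2.2.1 hdes
  have hvh : Valid (desSet σ') hl := hdes2 ▸ valid_encode hn hτ.2.2.2 hdes
  have hms : (gl ++ hl).Perm (labels B (π'.length + σ'.length)) := by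
    rw [hgl, hhl, ← List.map_append]
    have := encode_perm_labels (B := B) hperm hn
    rwa [hτ.1, hlen1, hlen2] at this
  obtain ⟨h1, h2, h3⟩ := decode_spec π' σ' hπ' hσ' hd' B gl hl hg hh hvg hvh hms
  refine ⟨⟨h1, h2⟩, ?_⟩
  rw [h3, hgl, hhl, ← List.map_append]
  exact dec_encode hπ hσ hd hτ hdes

lemma card_subset_eq {π π' σ σ' : List ℕ}
    (hπ : IsPerm π) (hπ' : IsPerm π') (hσ : IsPerm σ) (hσ' : IsPerm σ')
    (hlen1 : π.length = π'.length) (hdes1 : desSet π = desSet π')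
    (hlen2 : σ.length = σ'.length) (hdes2 : desSet σ = desSet σ')
    (hd : π.Disjoint σ) (hd' : π'.Disjoint σ') (B : Finset ℕ) :
    {τ : List ℕ | IsShuffle π σ τ ∧ desSet τ ⊆ B}.ncard =
      {τ : List ℕ | IsShuffle π' σ' τ ∧ desSet τ ⊆ B}.ncard := by
  set S := {τ : List ℕ | IsShuffle π σ τ ∧ desSet τ ⊆ B} with hS
  set S' := {τ : List ℕ | IsShuffle π' σ' τ ∧ desSet τ ⊆ B} with hS'
  set F : List ℕ → List ℕ := fun τ => dec (π' ++ σ') ((π ++ σ).map (lab B τ)) with hF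
  set G : List ℕ → List ℕ := fun τ => dec (π ++ σ) ((π' ++ σ').map (lab B τ)) with hG
  have hFs : ∀ τ ∈ S, (IsShuffle π' σ' (F τ) ∧ desSet (F τ) ⊆ B) ∧ G (F τ) = τ := by
    intro τ hτ
    exact F_spec hπ hπ' hσ hσ' hlen1 hdes1 hlen2 hdes2 hd hd' B hτ.1 hτ.2
  have hGs : ∀ τ ∈ S', (IsShuffle π σ (G τ) ∧ desSet (G τ) ⊆ B) ∧ F (G τ) = τ := by
    intro τ hτ
    exact F_spec hπ' hπ hσ' hσ hlen1.symm hdes1.symm hlen2.symm hdes2.symm hd' hd B hτ.1 hτ.2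
  have hbij : Set.BijOn F S S' := by
    apply Set.InvOn.bijOn (f' := G)
    · exact ⟨fun τ hτ => (hFs τ hτ).2, fun τ hτ => (hGs τ hτ).2⟩
    · exact fun τ hτ => (hFs τ hτ).1
    · exact fun τ hτ => (hGs τ hτ).1
  rw [← hbij.image_eq]
  exact (Set.ncard_image_of_injOn hbij.injOn).symm

end DSC

namespace DSC

lemma ncard_eq_filter_card {π σ : List ℕ} (hπ : IsPerm π) (hσ : IsPerm σ)
    (hd : π.Disjoint σ) (p : List ℕ → Prop) [DecidablePred p] :
    {τ : List ℕ | IsShuffle π σ τ ∧ p τ}.ncard =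
      ((shuffles π σ).filter p).card := by
  rw [← Set.ncard_coe_finset]
  congr 1
  ext τ
  simp only [Finset.coe_filter, Set.mem_setOf_eq, shuffles, Finset.mem_filter,
    List.mem_toFinset, List.mem_permutations]
  constructor
  · rintro ⟨h1, h2⟩; exact ⟨⟨shuffle_perm hπ hσ hd h1, h1⟩, h2⟩
  · rintro ⟨⟨_, h1⟩, h2⟩; exact ⟨h1, h2⟩

lemma filter_subset_card (π σ : List ℕ) (A : Finset ℕ) :
    ((shuffles π σ).filter (fun τ => desSet τ ⊆ A)).card =
      ∑ C ∈ A.powerset, ((shuffles π σ).filter (fun τ => desSet τ = C)).card := by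
  rw [Finset.card_eq_sum_card_fiberwise (f := desSet) (t := A.powerset)
    (fun τ hτ => Finset.mem_powerset.mpr (Finset.mem_filter.mp hτ).2)]
  apply Finset.sum_congr rfl
  intro C hC
  rw [Finset.filter_filter]
  congr 1
  apply Finset.filter_congr
  intro τ _
  constructor
  · exact fun h => h.2
  · exact fun h => ⟨h ▸ Finset.mem_powerset.mp hC, h⟩

end DSC


/-- The descent set is shuffle-compatible. -/
theorem desSet_shuffle_compatible (π π' σ σ' : List ℕ)
    (hπ : IsPerm π) (hπ' : IsPerm π') (hσ : IsPerm σ) (hσ' : IsPerm σ')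
    (hlen1 : π.length = π'.length) (hdes1 : desSet π = desSet π')
    (hlen2 : σ.length = σ'.length) (hdes2 : desSet σ = desSet σ')
    (hd : π.Disjoint σ) (hd' : π'.Disjoint σ') (A : Finset ℕ) :
    {τ : List ℕ | IsShuffle π σ τ ∧ desSet τ = A}.ncard =
      {τ : List ℕ | IsShuffle π' σ' τ ∧ desSet τ = A}.ncard := by
  have key : ∀ A : Finset ℕ,
      ((shuffles π σ).filter (fun τ => desSet τ = A)).card =
      ((shuffles π' σ').filter (fun τ => desSet τ = A)).card := by
    intro A
    induction A using Finset.strongInduction with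
    | _ A ih =>
      have hb : ((shuffles π σ).filter (fun τ => desSet τ ⊆ A)).card =
          ((shuffles π' σ').filter (fun τ => desSet τ ⊆ A)).card := by
        rw [← DSC.ncard_eq_filter_card hπ hσ hd, ← DSC.ncard_eq_filter_card hπ' hσ' hd']
        exact DSC.card_subset_eq hπ hπ' hσ hσ' hlen1 hdes1 hlen2 hdes2 hd hd' A
      rw [DSC.filter_subset_card, DSC.filter_subset_card] at hb
      rw [← Finset.add_sum_erase _ _ (Finset.mem_powerset_self A),
        ← Finset.add_sum_erase _ _ (Finset.mem_powerset_self A)] at hb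
      have hsum : ∑ C ∈ (A.powerset).erase A,
            ((shuffles π σ).filter (fun τ => desSet τ = C)).card =
          ∑ C ∈ (A.powerset).erase A,
            ((shuffles π' σ').filter (fun τ => desSet τ = C)).card := by
        apply Finset.sum_congr rfl
        intro C hC
        obtain ⟨hne, hsub⟩ := Finset.mem_erase.mp hC
        exact ih C (Finset.ssubset_iff_subset_ne.mpr ⟨Finset.mem_powerset.mp hsub, hne⟩)
      omega
  rw [DSC.ncard_eq_filter_card hπ hσ hd, DSC.ncard_eq_filter_card hπ' hσ' hd']
  exact key A
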